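/- Under the constraints of the recursion lemma with α₀ ∈ [0,1], for every i and every natural k ≥ 0, the inequality 2Q_i/(k+k₀)^{α_i-α₀} - Q_i β₀/(k+k₀)^{α_i} ≤ 2Q_i/(k+k₀+1)^{α_i-α₀} holds, provided (2/β₀) max{1, α_i - α₀} ≤ (k+k₀)^{1-α₀}. -/

import Mathlib

open Real

/-- For `t ≥ 1` and `γ > 0`, `1/t^γ - 1/(t+1)^γ ≤ γ / t^(γ+1)`. -/
lemma aux_rpow_diff (t γ : ℝ) (ht : 1 ≤ t) (hγ : 0 < γ) :
    1 / t ^ γ - 1 / (t + 1) ^ γ ≤ γ / t ^ (γ + 1) := by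
  have ht0 : (0 : ℝ) < t := lt_of_lt_of_le one_pos ht
  have ht1 : (0 : ℝ) < t + 1 := by linarith
  have htp : (0 : ℝ) < t ^ γ := rpow_pos_of_pos ht0 γ
  have ht1p : (0 : ℝ) < (t + 1) ^ γ := rpow_pos_of_pos ht1 γ
  have hmono : t ^ γ ≤ (t + 1) ^ γ :=
    rpow_le_rpow ht0.le (by linarith) hγ.le
  -- key numerator bound: (t+1)^γ - t^γ ≤ γ * (t+1)^γ / t
  have hnum : (t + 1) ^ γ - t ^ γ ≤ γ * (t + 1) ^ γ / t := by
    rcases le_or_gt γ 1 with hγ1 | hγ1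
    · -- (1 + 1/t)^γ ≤ 1 + γ/t
      have hb : (1 + 1 / t) ^ γ ≤ 1 + γ * (1 / t) :=
        rpow_one_add_le_one_add_mul_self (by
          have : (0:ℝ) < 1 / t := by positivity
          linarith) hγ.le hγ1
      have heq : (t + 1) ^ γ = t ^ γ * (1 + 1 / t) ^ γ := by
        rw [← mul_rpow ht0.le (by positivity)]
        congr 1
        field_simp
      have h2 : (t + 1) ^ γ ≤ t ^ γ * (1 + γ * (1 / t)) := by
        rw [heq]
        exact mul_le_mul_of_nonneg_left hb htp.le
      have h3 : t ^ γ * (1 + γ * (1 / t)) = t ^ γ + γ * t ^ γ / t := by ring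
      have h4 : γ * t ^ γ / t ≤ γ * (t + 1) ^ γ / t := by
        gcongr
      linarith
    · -- Bernoulli: (1 - 1/(t+1))^γ ≥ 1 - γ/(t+1)
      have hb : 1 + γ * (-(1 / (t + 1))) ≤ (1 + -(1 / (t + 1))) ^ γ := by
        apply one_add_mul_self_le_rpow_one_add _ hγ1.le
        have : 1 / (t + 1) ≤ 1 := by
          rw [div_le_one ht1]; linarith
        linarith
      have heq : (1 + -(1 / (t + 1))) ^ γ = t ^ γ / (t + 1) ^ γ := by
        rw [← div_rpow ht0.le ht1.le]
        congr 1
        field_simp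
        ring
      rw [heq] at hb
      have h2 : (1 - γ / (t + 1)) * (t + 1) ^ γ ≤ t ^ γ := by
        have := mul_le_mul_of_nonneg_right hb ht1p.le
        rw [div_mul_cancel₀ _ ht1p.ne'] at this
        calc (1 - γ / (t + 1)) * (t + 1) ^ γ
            = (1 + γ * (-(1 / (t + 1)))) * (t + 1) ^ γ := by ring
          _ ≤ t ^ γ := this
      have h3 : (t + 1) ^ γ - γ / (t + 1) * (t + 1) ^ γ ≤ t ^ γ := by
        nlinarith
      have h4 : γ / (t + 1) * (t + 1) ^ γ ≤ γ * (t + 1) ^ γ / t := by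
        rw [div_mul_eq_mul_div, div_le_div_iff₀ ht1 ht0]
        nlinarith [mul_pos hγ ht1p]
      linarith
  -- now conclude
  have hdiff : 1 / t ^ γ - 1 / (t + 1) ^ γ = ((t + 1) ^ γ - t ^ γ) / (t ^ γ * (t + 1) ^ γ) := by
    field_simp
  have h7 : t ^ (γ + 1) = t ^ γ * t := by
    rw [rpow_add ht0, rpow_one]
  calc 1 / t ^ γ - 1 / (t + 1) ^ γ
      = ((t + 1) ^ γ - t ^ γ) / (t ^ γ * (t + 1) ^ γ) := hdiff
    _ ≤ (γ * (t + 1) ^ γ / t) / (t ^ γ * (t + 1) ^ γ) := by gcongr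
    _ = γ / t ^ (γ + 1) := by rw [h7]; field_simp

theorem recursion_induction_step (Q β₀ k₀ α₀ αi : ℝ) (k : ℕ)
    (hQ : 0 < Q) (hβ₀ : 0 < β₀) (hk₀ : 1 ≤ k₀)
    (hα₀0 : 0 ≤ α₀) (hα₀1 : α₀ ≤ 1)
    (hkey : (2 / β₀) * max 1 (αi - α₀) ≤ ((k : ℝ) + k₀) ^ (1 - α₀)) :
    2 * Q / ((k : ℝ) + k₀) ^ (αi - α₀) - Q * β₀ / ((k : ℝ) + k₀) ^ αi ≤
      2 * Q / ((k : ℝ) + k₀ + 1) ^ (αi - α₀) := by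
  set t : ℝ := (k : ℝ) + k₀ with ht_def
  have hk : (0 : ℝ) ≤ (k : ℝ) := Nat.cast_nonneg k
  have ht : 1 ≤ t := by simp only [ht_def]; linarith
  have ht0 : (0 : ℝ) < t := lt_of_lt_of_le one_pos ht
  have ht1 : (0 : ℝ) < t + 1 := by linarith
  set γ : ℝ := αi - α₀ with hγ_def
  have htγ : (0 : ℝ) < t ^ γ := rpow_pos_of_pos ht0 γ
  have ht1γ : (0 : ℝ) < (t + 1) ^ γ := rpow_pos_of_pos ht1 γ
  have htαi : (0 : ℝ) < t ^ αi := rpow_pos_of_pos ht0 αi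
  rcases le_or_gt γ 0 with hγ | hγ
  · -- trivial case: t^γ ≥ (t+1)^γ
    have hmono : (t + 1) ^ γ ≤ t ^ γ :=
      rpow_le_rpow_of_nonpos ht0 (by linarith) hγ
    have h1 : 2 * Q / t ^ γ ≤ 2 * Q / (t + 1) ^ γ :=
      div_le_div_of_nonneg_left (by linarith) ht1γ hmono
    have h2 : 0 ≤ Q * β₀ / t ^ αi := by positivity
    linarith
  · -- main case
    have hdiff := aux_rpow_diff t γ ht hγ
    have hmax : γ ≤ max 1 γ := le_max_right 1 γ
    have hkey2 : 2 * γ / β₀ ≤ t ^ (1 - α₀) := by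
      refine le_trans ?_ hkey
      have h2β : (0:ℝ) ≤ 2 / β₀ := by positivity
      have := mul_le_mul_of_nonneg_left hmax h2β
      calc 2 * γ / β₀ = 2 / β₀ * γ := by ring
        _ ≤ 2 / β₀ * max 1 γ := this
    have hβt : 2 * γ ≤ β₀ * t ^ (1 - α₀) := by
      rw [div_le_iff₀ hβ₀] at hkey2
      linarith [hkey2]
    -- 2Q * (1/t^γ - 1/(t+1)^γ) ≤ 2Q * γ / t^(γ+1) ≤ Q β₀ / t^αi
    have hQ2 : (0:ℝ) ≤ 2 * Q := by linarith
    have step1 : 2 * Q / t ^ γ - 2 * Q / (t + 1) ^ γ ≤ 2 * Q * γ / t ^ (γ + 1) := by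
      have := mul_le_mul_of_nonneg_left hdiff hQ2
      calc 2 * Q / t ^ γ - 2 * Q / (t + 1) ^ γ
          = 2 * Q * (1 / t ^ γ - 1 / (t + 1) ^ γ) := by ring
        _ ≤ 2 * Q * (γ / t ^ (γ + 1)) := this
        _ = 2 * Q * γ / t ^ (γ + 1) := by ring
    have step2 : 2 * Q * γ / t ^ (γ + 1) ≤ Q * β₀ / t ^ αi := by
      have hsplit : t ^ (γ + 1) = t ^ (1 - α₀) * t ^ αi := by
        rw [← rpow_add ht0]
        congr 1
        rw [hγ_def]; ring
      have ht1α : (0:ℝ) < t ^ (1 - α₀) := rpow_pos_of_pos ht0 _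
      rw [hsplit, div_le_div_iff₀ (by positivity) htαi]
      have h1 : 2 * Q * γ = Q * (2 * γ) := by ring
      have h2 : Q * (2 * γ) ≤ Q * (β₀ * t ^ (1 - α₀)) :=
        mul_le_mul_of_nonneg_left hβt hQ.le
      nlinarith [mul_le_mul_of_nonneg_right h2 htαi.le]
    linarith
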